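/- Let l ∈ ℕ, let h : ℝ² → ℝ be C^max(l,3), let A : ℝ² → ℝ² be an invertible linear map, and let x ∈ ℝ² satisfy K₂(h)(A x) ≠ 0 and K₃(h)(A x) ≠ 0. Then I_l(h ∘ A)(x) = I_l(h)(A x), where I_l(h) = (3·K₂(h)/K₃(h))^l · W_l(h). -/

import Mathlib

/-- First partial derivative of `h : ℝ² → ℝ` in the `i`-th coordinate direction. -/
noncomputable def pd1 (h : (Fin 2 → ℝ) → ℝ) (i : Fin 2) (x : Fin 2 → ℝ) : ℝ :=
  fderiv ℝ h x (Pi.single i 1)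

/-- Second partial derivative of `h : ℝ² → ℝ`. -/
noncomputable def pd2 (h : (Fin 2 → ℝ) → ℝ) (i j : Fin 2) (x : Fin 2 → ℝ) : ℝ :=
  iteratedFDeriv ℝ 2 h x ![Pi.single i 1, Pi.single j 1]

/-- Third partial derivative of `h : ℝ² → ℝ`. -/
noncomputable def pd3 (h : (Fin 2 → ℝ) → ℝ) (i j m : Fin 2) (x : Fin 2 → ℝ) : ℝ :=
  iteratedFDeriv ℝ 3 h x ![Pi.single i 1, Pi.single j 1, Pi.single m 1]

/-- The rotated gradient `w_h(x) = (h₂(x), −h₁(x))`. -/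
noncomputable def wrot (h : (Fin 2 → ℝ) → ℝ) (x : Fin 2 → ℝ) : Fin 2 → ℝ :=
  ![pd1 h 1 x, -pd1 h 0 x]

/-- `W_l(h)(x) = (1/l!)·D^l h(x)(w_h(x), …, w_h(x))`. -/
noncomputable def Wl (l : ℕ) (h : (Fin 2 → ℝ) → ℝ) (x : Fin 2 → ℝ) : ℝ :=
  (1 / l.factorial : ℝ) * iteratedFDeriv ℝ l h x (fun _ => wrot h x)

/-- `K₂(h) = (1/2)(h₁₁h₂² − 2h₁₂h₁h₂ + h₂₂h₁²)`. -/
noncomputable def K2 (h : (Fin 2 → ℝ) → ℝ) (x : Fin 2 → ℝ) : ℝ :=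
  (1 / 2) * (pd2 h 0 0 x * (pd1 h 1 x) ^ 2 - 2 * pd2 h 0 1 x * pd1 h 0 x * pd1 h 1 x +
    pd2 h 1 1 x * (pd1 h 0 x) ^ 2)

/-- `K₃(h) = (1/6)(h₁₁₁h₂³ − 3h₁₁₂h₂²h₁ + 3h₁₂₂h₂h₁² − h₂₂₂h₁³)`. -/
noncomputable def K3 (h : (Fin 2 → ℝ) → ℝ) (x : Fin 2 → ℝ) : ℝ :=
  (1 / 6) * (pd3 h 0 0 0 x * (pd1 h 1 x) ^ 3 -
    3 * pd3 h 0 0 1 x * (pd1 h 1 x) ^ 2 * pd1 h 0 x +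
    3 * pd3 h 0 1 1 x * pd1 h 1 x * (pd1 h 0 x) ^ 2 -
    pd3 h 1 1 1 x * (pd1 h 0 x) ^ 3)

/-- The paper's invariant `I_l(h) = (3K₂(h)/K₃(h))^l · W_l(h)` of order `l` of binary forms. -/
noncomputable def Il (l : ℕ) (h : (Fin 2 → ℝ) → ℝ) (x : Fin 2 → ℝ) : ℝ :=
  (3 * K2 h x / K3 h x) ^ l * Wl l h x

namespace IlAux

open Fin Function

noncomputable def e0 : Fin 2 → ℝ := Pi.single 0 1
noncomputable def e1 : Fin 2 → ℝ := Pi.single 1 1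

lemma vec2 (v : Fin 2 → ℝ) : v = v 0 • e0 + v 1 • e1 := by
  funext i; fin_cases i <;> simp [e0, e1]

lemma upd20 (a b c : Fin 2 → ℝ) : Function.update ![a, b] (0 : Fin 2) c = ![c, b] := by
  funext i; fin_cases i <;> simp
lemma upd21 (a b c : Fin 2 → ℝ) : Function.update ![a, b] (1 : Fin 2) c = ![a, c] := by
  funext i; fin_cases i <;> simp

section M2
variable (f : ContinuousMultilinearMap ℝ (fun _ : Fin 2 => (Fin 2 → ℝ)) ℝ)

lemma m2_add0 (u u' v : Fin 2 → ℝ) : f ![u + u', v] = f ![u, v] + f ![u', v] := by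
  have h := f.map_update_add ![u, v] 0 u u'
  simpa [upd20] using h
lemma m2_add1 (u v v' : Fin 2 → ℝ) : f ![u, v + v'] = f ![u, v] + f ![u, v'] := by
  have h := f.map_update_add ![u, v] 1 v v'
  simpa [upd21] using h
lemma m2_smul0 (t : ℝ) (u v : Fin 2 → ℝ) : f ![t • u, v] = t * f ![u, v] := by
  have h := f.map_update_smul ![u, v] 0 t u
  simpa [upd20] using h
lemma m2_smul1 (t : ℝ) (u v : Fin 2 → ℝ) : f ![u, t • v] = t * f ![u, v] := by
  have h := f.map_update_smul ![u, v] 1 t v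
  simpa [upd21] using h

lemma ml2_expand (u v : Fin 2 → ℝ) :
    f ![u, v] = u 0 * v 0 * f ![e0, e0] + u 0 * v 1 * f ![e0, e1]
      + u 1 * v 0 * f ![e1, e0] + u 1 * v 1 * f ![e1, e1] := by
  conv_lhs => rw [vec2 u, vec2 v]
  rw [m2_add0, m2_add1, m2_add1]
  simp only [m2_smul0, m2_smul1]
  ring
end M2

lemma upd30 (a b c d : Fin 2 → ℝ) : Function.update ![a, b, c] (0 : Fin 3) d = ![d, b, c] := by
  funext i; fin_cases i <;> simp
lemma upd31 (a b c d : Fin 2 → ℝ) : Function.update ![a, b, c] (1 : Fin 3) d = ![a, d, c] := by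
  funext i; fin_cases i <;> simp
lemma upd32 (a b c d : Fin 2 → ℝ) : Function.update ![a, b, c] (2 : Fin 3) d = ![a, b, d] := by
  funext i; fin_cases i <;> simp

section M3
variable (f : ContinuousMultilinearMap ℝ (fun _ : Fin 3 => (Fin 2 → ℝ)) ℝ)

lemma m3_add0 (u u' v w : Fin 2 → ℝ) : f ![u + u', v, w] = f ![u, v, w] + f ![u', v, w] := by
  have h := f.map_update_add ![u, v, w] 0 u u'
  simpa [upd30] using h
lemma m3_add1 (u v v' w : Fin 2 → ℝ) : f ![u, v + v', w] = f ![u, v, w] + f ![u, v', w] := by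
  have h := f.map_update_add ![u, v, w] 1 v v'
  simpa [upd31] using h
lemma m3_add2 (u v w w' : Fin 2 → ℝ) : f ![u, v, w + w'] = f ![u, v, w] + f ![u, v, w'] := by
  have h := f.map_update_add ![u, v, w] 2 w w'
  simpa [upd32] using h
lemma m3_smul0 (t : ℝ) (u v w : Fin 2 → ℝ) : f ![t • u, v, w] = t * f ![u, v, w] := by
  have h := f.map_update_smul ![u, v, w] 0 t u
  simpa [upd30] using h
lemma m3_smul1 (t : ℝ) (u v w : Fin 2 → ℝ) : f ![u, t • v, w] = t * f ![u, v, w] := by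
  have h := f.map_update_smul ![u, v, w] 1 t v
  simpa [upd31] using h
lemma m3_smul2 (t : ℝ) (u v w : Fin 2 → ℝ) : f ![u, v, t • w] = t * f ![u, v, w] := by
  have h := f.map_update_smul ![u, v, w] 2 t w
  simpa [upd32] using h

lemma ml3_expand (u v w : Fin 2 → ℝ) :
    f ![u, v, w] =
      u 0 * v 0 * w 0 * f ![e0, e0, e0] + u 0 * v 0 * w 1 * f ![e0, e0, e1]
      + u 0 * v 1 * w 0 * f ![e0, e1, e0] + u 0 * v 1 * w 1 * f ![e0, e1, e1]
      + u 1 * v 0 * w 0 * f ![e1, e0, e0] + u 1 * v 0 * w 1 * f ![e1, e0, e1]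
      + u 1 * v 1 * w 0 * f ![e1, e1, e0] + u 1 * v 1 * w 1 * f ![e1, e1, e1] := by
  conv_lhs => rw [vec2 u, vec2 v, vec2 w]
  rw [m3_add0]
  simp only [m3_add1, m3_add2, m3_smul0, m3_smul1, m3_smul2]
  ring
end M3

section Sym
variable {F : Type*} [NormedAddCommGroup F] [NormedSpace ℝ F]

lemma two_apply (f : (Fin 2 → ℝ) → F) (x : Fin 2 → ℝ) (u v : Fin 2 → ℝ) :
    iteratedFDeriv ℝ 2 f x ![u, v] = fderiv ℝ (fderiv ℝ f) x u v := by
  rw [iteratedFDeriv_succ_apply_right, iteratedFDeriv_one_apply]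
  congr 1

lemma sym2 (f : (Fin 2 → ℝ) → F) (hf : ContDiff ℝ 2 f) (x u v : Fin 2 → ℝ) :
    iteratedFDeriv ℝ 2 f x ![u, v] = iteratedFDeriv ℝ 2 f x ![v, u] := by
  rw [two_apply, two_apply]
  exact (hf.contDiffAt.isSymmSndFDerivAt (by simp [minSmoothness_of_isRCLikeNormedField])).eq u v

lemma three_eq (f : (Fin 2 → ℝ) → ℝ) (x u v w : Fin 2 → ℝ) :
    iteratedFDeriv ℝ 3 f x ![u, v, w]
      = iteratedFDeriv ℝ 2 (fderiv ℝ f) x ![u, v] w := by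
  rw [iteratedFDeriv_succ_apply_right]
  congr 2
  funext i; fin_cases i <;> rfl

lemma sym3_12 (f : (Fin 2 → ℝ) → ℝ) (hf : ContDiff ℝ 3 f) (x u v w : Fin 2 → ℝ) :
    iteratedFDeriv ℝ 3 f x ![u, v, w] = iteratedFDeriv ℝ 3 f x ![v, u, w] := by
  rw [three_eq, three_eq, sym2 (fderiv ℝ f) (hf.fderiv_right (by norm_num)) x u v]

lemma sym3_23 (f : (Fin 2 → ℝ) → ℝ) (hf : ContDiff ℝ 3 f) (x u v w : Fin 2 → ℝ) :
    iteratedFDeriv ℝ 3 f x ![u, v, w] = iteratedFDeriv ℝ 3 f x ![u, w, v] := by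
  have hd : DifferentiableAt ℝ (iteratedFDeriv ℝ 2 f) x :=
    (hf.differentiable_iteratedFDeriv (by norm_num)).differentiableAt
  have key : ∀ a b c : Fin 2 → ℝ, iteratedFDeriv ℝ 3 f x ![a, b, c]
      = fderiv ℝ (fun y => iteratedFDeriv ℝ 2 f y ![b, c]) x a := by
    intro a b c
    rw [iteratedFDeriv_succ_apply_left, fderiv_continuousMultilinear_apply_const_apply hd]
    congr 1
  rw [key, key]
  have hfun : (fun y => iteratedFDeriv ℝ 2 f y ![v, w])
      = (fun y => iteratedFDeriv ℝ 2 f y ![w, v]) :=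
    funext fun y => sym2 f (hf.of_le (by norm_num)) y v w
  rw [hfun]
end Sym

end IlAux


open IlAux in
/-- The functions `I_l` are `GL(2)`-invariants of binary forms:
`I_l(h∘A)(x) = I_l(h)(Ax)` for every invertible linear map `A`, provided
`K₂(h)(Ax) ≠ 0` and `K₃(h)(Ax) ≠ 0`. -/
theorem Il_invariance (l : ℕ) (h : (Fin 2 → ℝ) → ℝ) (hh : ContDiff ℝ (max l 3) h)
    (A : (Fin 2 → ℝ) →ₗ[ℝ] (Fin 2 → ℝ)) (hA : LinearMap.det A ≠ 0)
    (x : Fin 2 → ℝ) (hx2 : K2 h (A x) ≠ 0) (hx3 : K3 h (A x) ≠ 0) :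
    Il l (fun y => h (A y)) x = Il l h (A x) := by
  classical
  have hle1 : ((1 : ℕ) : WithTop ℕ∞) ≤ (l : WithTop ℕ∞) ⊔ 3 :=
    le_trans (by exact_mod_cast (by norm_num : (1:ℕ) ≤ 3)) le_sup_right
  have hle2 : ((2 : ℕ) : WithTop ℕ∞) ≤ (l : WithTop ℕ∞) ⊔ 3 :=
    le_trans (by exact_mod_cast (by norm_num : (2:ℕ) ≤ 3)) le_sup_right
  have hle3 : ((3 : ℕ) : WithTop ℕ∞) ≤ (l : WithTop ℕ∞) ⊔ 3 :=
    le_trans (by exact_mod_cast (by norm_num : (3:ℕ) ≤ 3)) le_sup_right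
  have hlel : ((l : ℕ) : WithTop ℕ∞) ≤ (l : WithTop ℕ∞) ⊔ 3 := le_sup_left
  have hf2 : ContDiff ℝ 2 h := hh.of_le (by exact_mod_cast hle2)
  have hf3 : ContDiff ℝ 3 h := hh.of_le (by exact_mod_cast hle3)
  set Ac : (Fin 2 → ℝ) →L[ℝ] (Fin 2 → ℝ) := LinearMap.toContinuousLinearMap A with hAcdef
  have hcomp : ∀ (n : ℕ), ((n : ℕ) : WithTop ℕ∞) ≤ (l : WithTop ℕ∞) ⊔ 3 →
      ∀ v : Fin n → (Fin 2 → ℝ),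
      iteratedFDeriv ℝ n (fun y => h (A y)) x v
        = iteratedFDeriv ℝ n h (A x) (fun i => A (v i)) := by
    intro n hn v
    have hc := Ac.iteratedFDeriv_comp_right hh x hn
    have heq : (fun y => h (A y)) = h ∘ Ac := rfl
    rw [heq, hc]
    rfl
  -- first derivatives of the composed map
  have hone : ∀ (φ : (Fin 2 → ℝ) → ℝ) (y u : Fin 2 → ℝ),
      fderiv ℝ φ y u = iteratedFDeriv ℝ 1 φ y ![u] := by
    intro φ y u
    rw [iteratedFDeriv_one_apply]
    simp
  have hclm : ∀ (T : (Fin 2 → ℝ) →L[ℝ] ℝ) (v : Fin 2 → ℝ),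
      T v = v 0 * T (Pi.single 0 1) + v 1 * T (Pi.single 1 1) := by
    intro T v
    conv_lhs => rw [vec2 v]
    rw [map_add, map_smul, map_smul, smul_eq_mul, smul_eq_mul]
    rfl
  have hq : ∀ i : Fin 2, pd1 (fun y => h (A y)) i x
      = A (Pi.single i 1) 0 * pd1 h 0 (A x) + A (Pi.single i 1) 1 * pd1 h 1 (A x) := by
    intro i
    rw [pd1, hone, hcomp 1 hle1, iteratedFDeriv_one_apply, Matrix.cons_val_zero, hclm]
    rfl
  -- determinant in terms of matrix entries
  have hdet : LinearMap.det A
      = A (Pi.single 0 1) 0 * A (Pi.single 1 1) 1 - A (Pi.single 1 1) 0 * A (Pi.single 0 1) 1 := by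
    have hsing : ∀ i : Fin 2, (Pi.single i 1 : Fin 2 → ℝ) = fun j' => if j' = i then 1 else 0 := by
      intro i; funext j; simp [Pi.single_apply]
    rw [← LinearMap.det_toMatrix' A, Matrix.det_fin_two]
    simp [LinearMap.toMatrix'_apply, hsing]
  -- second derivatives of the composed map
  have hq2 : ∀ i j : Fin 2, pd2 (fun y => h (A y)) i j x =
      A (Pi.single i 1) 0 * A (Pi.single j 1) 0 * pd2 h 0 0 (A x)
      + A (Pi.single i 1) 0 * A (Pi.single j 1) 1 * pd2 h 0 1 (A x)
      + A (Pi.single i 1) 1 * A (Pi.single j 1) 0 * pd2 h 1 0 (A x)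
      + A (Pi.single i 1) 1 * A (Pi.single j 1) 1 * pd2 h 1 1 (A x) := by
    intro i j
    rw [pd2, hcomp 2 hle2]
    have harg : (fun k => A (![(Pi.single i 1 : Fin 2 → ℝ), Pi.single j 1] k))
        = ![A (Pi.single i 1), A (Pi.single j 1)] := by
      funext k; fin_cases k <;> rfl
    rw [harg, ml2_expand]
    rfl
  -- third derivatives of the composed map
  have hq3 : ∀ i j k : Fin 2, pd3 (fun y => h (A y)) i j k x =
      A (Pi.single i 1) 0 * A (Pi.single j 1) 0 * A (Pi.single k 1) 0 * pd3 h 0 0 0 (A x)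
      + A (Pi.single i 1) 0 * A (Pi.single j 1) 0 * A (Pi.single k 1) 1 * pd3 h 0 0 1 (A x)
      + A (Pi.single i 1) 0 * A (Pi.single j 1) 1 * A (Pi.single k 1) 0 * pd3 h 0 1 0 (A x)
      + A (Pi.single i 1) 0 * A (Pi.single j 1) 1 * A (Pi.single k 1) 1 * pd3 h 0 1 1 (A x)
      + A (Pi.single i 1) 1 * A (Pi.single j 1) 0 * A (Pi.single k 1) 0 * pd3 h 1 0 0 (A x)
      + A (Pi.single i 1) 1 * A (Pi.single j 1) 0 * A (Pi.single k 1) 1 * pd3 h 1 0 1 (A x)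
      + A (Pi.single i 1) 1 * A (Pi.single j 1) 1 * A (Pi.single k 1) 0 * pd3 h 1 1 0 (A x)
      + A (Pi.single i 1) 1 * A (Pi.single j 1) 1 * A (Pi.single k 1) 1 * pd3 h 1 1 1 (A x) := by
    intro i j k
    rw [pd3, hcomp 3 hle3]
    have harg : (fun m => A (![(Pi.single i 1 : Fin 2 → ℝ), Pi.single j 1, Pi.single k 1] m))
        = ![A (Pi.single i 1), A (Pi.single j 1), A (Pi.single k 1)] := by
      funext m; fin_cases m <;> rfl
    rw [harg, ml3_expand]
    rfl
  -- symmetry facts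
  have hs2 : pd2 h 1 0 (A x) = pd2 h 0 1 (A x) :=
    sym2 h hf2 (A x) (Pi.single 1 1) (Pi.single 0 1)
  have hs010 : pd3 h 0 1 0 (A x) = pd3 h 0 0 1 (A x) :=
    sym3_23 h hf3 (A x) (Pi.single 0 1) (Pi.single 1 1) (Pi.single 0 1)
  have hs100 : pd3 h 1 0 0 (A x) = pd3 h 0 0 1 (A x) := by
    have e1 : pd3 h 1 0 0 (A x) = pd3 h 0 1 0 (A x) :=
      sym3_12 h hf3 (A x) (Pi.single 1 1) (Pi.single 0 1) (Pi.single 0 1)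
    rw [e1, hs010]
  have hs101 : pd3 h 1 0 1 (A x) = pd3 h 0 1 1 (A x) :=
    sym3_12 h hf3 (A x) (Pi.single 1 1) (Pi.single 0 1) (Pi.single 1 1)
  have hs110 : pd3 h 1 1 0 (A x) = pd3 h 0 1 1 (A x) := by
    have e1 : pd3 h 1 1 0 (A x) = pd3 h 1 0 1 (A x) :=
      sym3_23 h hf3 (A x) (Pi.single 1 1) (Pi.single 1 1) (Pi.single 0 1)
    rw [e1, hs101]
  -- K2 transformation
  have hK2 : K2 (fun y => h (A y)) x = (LinearMap.det A) ^ 2 * K2 h (A x) := by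
    rw [K2, K2, hq 0, hq 1, hq2 0 0, hq2 0 1, hq2 1 1, hs2, hdet]
    ring
  -- K3 transformation
  have hK3 : K3 (fun y => h (A y)) x = (LinearMap.det A) ^ 3 * K3 h (A x) := by
    rw [K3, K3, hq 0, hq 1, hq3 0 0 0, hq3 0 0 1, hq3 0 1 1, hq3 1 1 1,
      hs010, hs100, hs101, hs110, hdet]
    ring
  -- componentwise action of A
  have hlin : ∀ (v : Fin 2 → ℝ) (k : Fin 2),
      A v k = v 0 * A (Pi.single 0 1) k + v 1 * A (Pi.single 1 1) k := by
    intro v k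
    conv_lhs => rw [vec2 v]
    rw [map_add, map_smul, map_smul]
    simp [e0, e1, smul_eq_mul]
  -- the rotated gradient transforms with the determinant
  have hAw : A (wrot (fun y => h (A y)) x) = (LinearMap.det A) • wrot h (A x) := by
    funext k
    rw [hlin]
    have hw0 : wrot (fun y => h (A y)) x 0 = pd1 (fun y => h (A y)) 1 x := rfl
    have hw1 : wrot (fun y => h (A y)) x 1 = -pd1 (fun y => h (A y)) 0 x := rfl
    rw [hw0, hw1, hq 0, hq 1]
    fin_cases k <;>
      simp only [Fin.mk_zero, Fin.mk_one, Fin.isValue, Pi.smul_apply, smul_eq_mul, wrot,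
        Matrix.cons_val_zero, Matrix.cons_val_one, Matrix.head_cons, hdet] <;> ring
  -- W_l transforms with det^l
  have hWl : Wl l (fun y => h (A y)) x = (LinearMap.det A) ^ l * Wl l h (A x) := by
    rw [Wl, Wl, hcomp l hlel]
    have harg : (fun _ : Fin l => A (wrot (fun y => h (A y)) x))
        = fun _ : Fin l => (LinearMap.det A) • wrot h (A x) := by
      funext i; rw [hAw]
    rw [harg]
    have hms := (iteratedFDeriv ℝ l h (A x)).map_smul_univ
      (fun _ : Fin l => LinearMap.det A) (fun _ : Fin l => wrot h (A x))
    rw [hms]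
    simp [Finset.prod_const, smul_eq_mul]
    ring
  -- assemble
  rw [Il, Il, hK2, hK3, hWl]
  have hdne : LinearMap.det A ≠ 0 := hA
  have h3ne : K3 h (A x) ≠ 0 := hx3
  rw [mul_comm (3 : ℝ) ((LinearMap.det A) ^ 2 * K2 h (A x))]
  rw [div_pow, div_pow]
  field_simp
  ring
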